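/- Let (R,B) be a fusion ring admitting a fixed-point-free automorphism φ of prime order p. Then FPdim(x) is a rational integer for every x ∈ B, and FPdim(R) := Σ_{x∈B} FPdim(x)² ≡ 1 (mod p). -/

import Mathlib

open Finset

/-- A fusion ring with basis indexed by `Fin n`, given by its structure
constants `c`, distinguished unit basis element `one`, and duality `dual`. -/
structure FusionData (n : ℕ) where
  c : Fin n → Fin n → Fin n → ℕ
  one : Fin n
  dual : Fin n → Fin n
  dual_dual : ∀ i, dual (dual i) = i
  c_one_left : ∀ i k, c one i k = if k = i then 1 else 0
  c_one_right : ∀ i k, c i one k = if k = i then 1 else 0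
  c_dual : ∀ i j, c i j one = if j = dual i then 1 else 0
  assoc : ∀ i j l m, ∑ k, c i j k * c k l m = ∑ k, c j l k * c i k m

/-- `d` is the Frobenius–Perron dimension function: the (unique) ring
homomorphism `R → ℝ` positive on the basis. -/
def FusionData.IsFPdim {n : ℕ} (F : FusionData n) (d : Fin n → ℝ) : Prop :=
  (∀ i, 0 < d i) ∧ ∀ i j, d i * d j = ∑ k, (F.c i j k : ℝ) * d k

/-- `φ` is a fusion-ring automorphism: a permutation of the basis fixing the
unit and preserving the structure constants. -/
def FusionData.IsAut {n : ℕ} (F : FusionData n) (φ : Equiv.Perm (Fin n)) : Prop :=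
  φ F.one = F.one ∧ ∀ i j k, F.c (φ i) (φ j) (φ k) = F.c i j k

/-- `φ` is fixed-point-free: the unit is its only fixed basis element. -/
def FusionData.Fpf {n : ℕ} (F : FusionData n) (φ : Equiv.Perm (Fin n)) : Prop :=
  ∀ i, φ i = i → i = F.one

/-- A character of the fusion ring: a unital ring homomorphism `R → ℂ`,
recorded via its values on the basis. -/
def FusionData.IsChar {n : ℕ} (F : FusionData n) (χ : Fin n → ℂ) : Prop :=
  χ F.one = 1 ∧ ∀ i j, χ i * χ j = ∑ k, (F.c i j k : ℂ) * χ k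

namespace FusionData
variable {n : ℕ} (F : FusionData n)

lemma dual_one : F.dual F.one = F.one := by
  have h1 := F.c_dual F.one F.one
  have h2 := F.c_one_left F.one F.one
  rw [if_pos rfl] at h2
  by_contra h
  rw [h2, if_neg (fun hh => h hh.symm)] at h1
  omega

lemma frob_one (i j l : Fin n) : F.c i j (F.dual l) = F.c j l (F.dual i) := by
  have h := F.assoc i j l F.one
  have e1 : ∀ k : Fin n, F.c k l F.one = if k = F.dual l then 1 else 0 := by
    intro k
    rw [F.c_dual k l]
    congr 1
    simp only [eq_iff_iff]
    constructor
    · intro hh; rw [hh, F.dual_dual]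
    · intro hh; rw [hh, F.dual_dual]
  have e2 : ∀ k : Fin n, F.c i k F.one = if k = F.dual i then 1 else 0 := fun k => F.c_dual i k
  simp only [e1, e2, mul_ite, mul_one, mul_zero, Finset.sum_ite_eq', Finset.mem_univ, if_pos] at h
  exact h

lemma frob2 (i j k : Fin n) : F.c i j k = F.c j (F.dual k) (F.dual i) := by
  have := F.frob_one i j (F.dual k)
  rwa [F.dual_dual] at this

lemma frob3 (i j k : Fin n) : F.c i j k = F.c (F.dual k) i (F.dual j) := by
  rw [F.frob2 i j k, F.frob2 j (F.dual k) (F.dual i), F.dual_dual]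

/-- the dual as a permutation -/
def dualPerm : Equiv.Perm (Fin n) := Function.Involutive.toPerm F.dual F.dual_dual

lemma key {L : Type} [CommRing L] (χ ψ : Fin n → L)
    (hχ : ∀ i j, χ i * χ j = ∑ k, (F.c i j k : L) * χ k)
    (hψ : ∀ i j, ψ i * ψ j = ∑ k, (F.c i j k : L) * ψ k) (a : Fin n) :
    χ a * (∑ i, χ i * ψ (F.dual i)) = ψ a * (∑ i, χ i * ψ (F.dual i)) := by
  have inner : ∀ k : Fin n, (∑ i, (F.c a i k : L) * ψ (F.dual i)) = ψ (F.dual k) * ψ a := by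
    intro k
    rw [← Equiv.sum_comp F.dualPerm (fun i => (F.c a i k : L) * ψ (F.dual i))]
    have h : ∀ i : Fin n, (F.c a (F.dualPerm i) k : L) * ψ (F.dual (F.dualPerm i))
        = (F.c (F.dual k) a i : L) * ψ i := by
      intro i
      have h1 : F.c a (F.dualPerm i) k = F.c (F.dual k) a i := by
        rw [F.frob3 a (F.dualPerm i) k]
        congr 1
        exact F.dual_dual i
      rw [h1]
      congr 1
      exact congrArg ψ (F.dual_dual i)
    rw [Finset.sum_congr rfl (fun i _ => h i), ← hψ]
  calc χ a * (∑ i, χ i * ψ (F.dual i)) = ∑ i, (χ a * χ i) * ψ (F.dual i) := by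
        rw [Finset.mul_sum]; exact Finset.sum_congr rfl (fun i _ => (mul_assoc _ _ _).symm)
    _ = ∑ i, (∑ k, (F.c a i k : L) * χ k) * ψ (F.dual i) := by
        exact Finset.sum_congr rfl (fun i _ => by rw [hχ])
    _ = ∑ i, ∑ k, χ k * ((F.c a i k : L) * ψ (F.dual i)) := by
        refine Finset.sum_congr rfl (fun i _ => ?_)
        rw [Finset.sum_mul]
        exact Finset.sum_congr rfl (fun k _ => by ring)
    _ = ∑ k, χ k * (∑ i, (F.c a i k : L) * ψ (F.dual i)) := by
        rw [Finset.sum_comm]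
        exact Finset.sum_congr rfl (fun k _ => by rw [Finset.mul_sum])
    _ = ∑ k, χ k * (ψ (F.dual k) * ψ a) := by
        exact Finset.sum_congr rfl (fun k _ => by rw [inner])
    _ = ψ a * (∑ i, χ i * ψ (F.dual i)) := by
        rw [Finset.mul_sum]
        exact Finset.sum_congr rfl (fun k _ => by ring)

lemma fpdim_unique {d d' : Fin n → ℝ} (hd : F.IsFPdim d) (hd' : F.IsFPdim d') : d = d' := by
  have hT : 0 < ∑ i, d i * d' (F.dual i) := by
    have : Nonempty (Fin n) := ⟨F.one⟩
    exact Finset.sum_pos (fun i _ => mul_pos (hd.1 i) (hd'.1 _)) Finset.univ_nonempty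
  funext a
  exact mul_right_cancel₀ (ne_of_gt hT) (F.key d d' hd.2 hd'.2 a)

lemma d_one {d : Fin n → ℝ} (hd : F.IsFPdim d) : d F.one = 1 := by
  have h := hd.2 F.one F.one
  simp only [F.c_one_left] at h
  have h2 : ∑ x : Fin n, ((if x = F.one then (1:ℕ) else 0 : ℕ) : ℝ) * d x = d F.one := by
    simp
  rw [h2] at h
  have h1 := hd.1 F.one
  nlinarith

lemma phi_dual {φ : Equiv.Perm (Fin n)} (hA : F.IsAut φ) (i : Fin n) :
    φ (F.dual i) = F.dual (φ i) := by
  have h := hA.2 i (F.dual i) F.one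
  rw [hA.1, F.c_dual, F.c_dual, if_pos rfl] at h
  by_contra hne
  rw [if_neg hne] at h
  omega

lemma fpdim_phi {φ : Equiv.Perm (Fin n)} (hA : F.IsAut φ) {d : Fin n → ℝ}
    (hd : F.IsFPdim d) (i : Fin n) : d (φ i) = d i := by
  have h' : F.IsFPdim (fun i => d (φ i)) := by
    refine ⟨fun i => hd.1 _, fun i j => ?_⟩
    have h := hd.2 (φ i) (φ j)
    rw [← Equiv.sum_comp φ (fun k => (F.c (φ i) (φ j) k : ℝ) * d k)] at h
    simpa only [hA.2] using h
  exact congrFun (F.fpdim_unique h' hd) i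

lemma d_integral {d : Fin n → ℝ} (hd : F.IsFPdim d) (i : Fin n) : IsIntegral ℤ (d i) := by
  classical
  set M : Matrix (Fin n) (Fin n) ℤ := Matrix.of (fun j k => (F.c i j k : ℤ)) with hM
  have hvne : d ≠ 0 := by
    intro hc
    have := F.d_one hd
    rw [hc] at this
    simp at this
  have hmv : (M.map (Int.cast : ℤ → ℝ)).mulVec d = d i • d := by
    funext j
    have : (M.map (Int.cast : ℤ → ℝ)).mulVec d j = ∑ k, (F.c i j k : ℝ) * d k := by
      simp [Matrix.mulVec, dotProduct, hM]
    rw [this, ← hd.2 i j]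
    simp [mul_comm]
  refine ⟨M.charpoly, M.charpoly_monic, ?_⟩
  have hmap : (M.map (Int.cast : ℤ → ℝ)).charpoly = M.charpoly.map (Int.castRingHom ℝ) :=
    Matrix.charpoly_map M (Int.castRingHom ℝ)
  have h0 : (Matrix.scalar (Fin n) (d i) - M.map (Int.cast : ℤ → ℝ)).mulVec d = 0 := by
    rw [Matrix.sub_mulVec, hmv]
    simp [Matrix.smul_mulVec, Matrix.mulVec_one]
  have hdet : (Matrix.scalar (Fin n) (d i) - M.map (Int.cast : ℤ → ℝ)).det = 0 :=
    Matrix.exists_mulVec_eq_zero_iff.mp ⟨d, hvne, h0⟩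
  have heval : (M.map (Int.cast : ℤ → ℝ)).charpoly.eval (d i) = 0 := by
    rw [Matrix.charpoly, eval_det, Matrix.matPolyEquiv_charmatrix]
    simpa using hdet
  rw [hmap] at heval
  rwa [Polynomial.eval₂_eq_eval_map]

end FusionData

lemma fix_of_pow_fix {α : Type} [Finite α] {φ : Equiv.Perm α} {p k : ℕ}
    (hp : p.Prime) (hord : orderOf φ = p) (a : α) (hk0 : k ≠ 0)
    (hkp : k < p) (hfix : (φ ^ k) a = a) : φ a = a := by
  have hcop : Nat.Coprime p k := Nat.coprime_of_lt_prime hk0 hkp hp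
  have hgcd : Int.gcd (k : ℤ) (p : ℤ) = 1 := by
    simpa [Int.gcd_natCast_natCast] using (Nat.coprime_comm.mp hcop)
  have hbez : (1 : ℤ) = (k : ℤ) * Int.gcdA (k : ℤ) (p : ℤ) + (p : ℤ) * Int.gcdB (k : ℤ) (p : ℤ) := by
    have := Int.gcd_eq_gcd_ab (k : ℤ) (p : ℤ)
    rw [hgcd] at this
    exact_mod_cast this
  set u := Int.gcdA (k : ℤ) (p : ℤ)
  set v := Int.gcdB (k : ℤ) (p : ℤ)
  have hφ : φ = (φ ^ (k : ℤ)) ^ u * (φ ^ (p : ℤ)) ^ v := by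
    rw [← zpow_mul, ← zpow_mul, ← zpow_add, ← hbez, zpow_one]
  have h1 : Function.IsFixedPt (φ ^ (k:ℕ)) a := hfix
  have h1' : Function.IsFixedPt ((φ ^ (k : ℤ)) ^ u) a := by
    have := (h1.perm_zpow (e := φ ^ (k:ℕ)) u)
    simpa [← zpow_natCast, ← zpow_mul] using this
  have h2 : Function.IsFixedPt (φ ^ (p:ℕ)) a := by
    rw [← hord, pow_orderOf_eq_one]; exact congrFun rfl a
  have h2' : Function.IsFixedPt ((φ ^ (p : ℤ)) ^ v) a := by
    have := (h2.perm_zpow (e := φ ^ (p:ℕ)) v)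
    simpa [← zpow_natCast, ← zpow_mul] using this
  have hfin : φ a = ((φ ^ (k : ℤ)) ^ u) (((φ ^ (p : ℤ)) ^ v) a) := by
    conv_lhs => rw [hφ]
    exact Equiv.Perm.mul_apply _ _ a
  rw [hfin, h2', h1']
lemma exists_reps {α : Type} [DecidableEq α] [Fintype α] {φ : Equiv.Perm α} {p : ℕ}
    (hp : p.Prime) (hord : orderOf φ = p) :
    ∀ s : Finset α, (∀ i ∈ s, φ i ∈ s) → (∀ i ∈ s, φ i ≠ i) →
    ∃ r : Finset α, r ⊆ s ∧ ∀ {M : Type} [AddCommMonoid M] (g : α → M),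
      (∀ i, g (φ i) = g i) → ∑ i ∈ s, g i = p • ∑ i ∈ r, g i := by
  intro s
  induction s using Finset.strongInduction with
  | _ s ih =>
    intro hcl hnf
    rcases s.eq_empty_or_nonempty with rfl | ⟨a, ha⟩
    · exact ⟨∅, subset_rfl, fun g hg => by simp⟩
    have hmem_pow : ∀ t : ℕ, (φ ^ t) a ∈ s := by
      intro t
      induction t with
      | zero => simpa using ha
      | succ t iht =>
        have h : (φ ^ (t + 1)) a = φ ((φ ^ t) a) := by
          rw [pow_succ']; rfl
        rw [h]; exact hcl _ iht
    have key : ∀ u v : Fin p, (u : ℕ) < (v : ℕ) → (φ ^ (u : ℕ)) a = (φ ^ (v : ℕ)) a → False := by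
      intro u v huv h
      have hk0 : (v : ℕ) - (u : ℕ) ≠ 0 := by omega
      have hkp : (v : ℕ) - (u : ℕ) < p := by omega
      have hfix : (φ ^ ((v : ℕ) - (u : ℕ))) ((φ ^ (u : ℕ)) a) = (φ ^ (u : ℕ)) a := by
        rw [← Equiv.Perm.mul_apply, ← pow_add]
        have he : (v : ℕ) - (u : ℕ) + (u : ℕ) = (v : ℕ) := by omega
        rw [he]
        exact h.symm
      exact hnf _ (hmem_pow _) (fix_of_pow_fix hp hord ((φ ^ (u : ℕ)) a) hk0 hkp hfix)
    have hinj : ∀ x ∈ (Finset.univ : Finset (Fin p)), ∀ y ∈ (Finset.univ : Finset (Fin p)),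
        (φ ^ (x : ℕ)) a = (φ ^ (y : ℕ)) a → x = y := by
      intro x _ y _ h
      by_contra hne
      rcases Nat.lt_or_ge (x : ℕ) (y : ℕ) with hlt | hge
      · exact key x y hlt h
      · have hlt : (y : ℕ) < (x : ℕ) := by
          rcases Nat.eq_or_lt_of_le hge with he | hl
          · exact absurd (Fin.ext he.symm) hne
          · exact hl
        exact key y x hlt h.symm
    set O : Finset α := Finset.image (fun t : Fin p => (φ ^ (t : ℕ)) a) Finset.univ with hO
    have hOsub : O ⊆ s := by
      intro x hx
      rw [hO, Finset.mem_image] at hx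
      obtain ⟨t, _, rfl⟩ := hx
      exact hmem_pow _
    have haO : a ∈ O := by
      rw [hO, Finset.mem_image]
      exact ⟨⟨0, hp.pos⟩, Finset.mem_univ _, by simp⟩
    have hOphi : ∀ i, φ i ∈ O → i ∈ O := by
      intro i hi
      rw [hO, Finset.mem_image] at hi ⊢
      obtain ⟨t, _, ht⟩ := hi
      refine ⟨⟨(p - 1 + (t : ℕ)) % p, Nat.mod_lt _ hp.pos⟩, Finset.mem_univ _, ?_⟩
      have h1 : φ ^ ((p - 1 + (t : ℕ)) % p) = φ ^ (p - 1 + (t : ℕ)) := by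
        have h := pow_mod_orderOf (x := φ) (n := p - 1 + (t : ℕ))
        rwa [hord] at h
      have h2 : (φ ^ (p - 1 + (t : ℕ))) a = (φ ^ (p - 1)) ((φ ^ (t : ℕ)) a) := by
        rw [← Equiv.Perm.mul_apply, ← pow_add]
      have h3 : (φ ^ (p - 1)) (φ i) = i := by
        rw [← Equiv.Perm.mul_apply, ← pow_succ]
        have he : p - 1 + 1 = p := Nat.succ_pred_eq_of_pos hp.pos
        rw [he, ← hord, pow_orderOf_eq_one]
        rfl
      show (φ ^ ((p - 1 + (t : ℕ)) % p)) a = i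
      rw [h1, h2, ht, h3]
    set s' := s \ O with hs'
    have hss : s' ⊂ s := Finset.sdiff_ssubset hOsub ⟨a, haO⟩
    have hcl' : ∀ i ∈ s', φ i ∈ s' := by
      intro i hi
      rw [hs', Finset.mem_sdiff] at hi ⊢
      exact ⟨hcl i hi.1, fun hc => hi.2 (hOphi i hc)⟩
    have hnf' : ∀ i ∈ s', φ i ≠ i := fun i hi => hnf i (Finset.mem_sdiff.mp hi).1
    obtain ⟨r', hr'sub, hr'⟩ := ih s' hss hcl' hnf'
    have har' : a ∉ r' := fun hc => (Finset.mem_sdiff.mp (hr'sub hc)).2 haO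
    refine ⟨insert a r', ?_, ?_⟩
    · intro x hx
      rcases Finset.mem_insert.mp hx with rfl | hx
      · exact ha
      · exact (Finset.mem_sdiff.mp (hr'sub hx)).1
    · intro M _ g hg
      have hgpow : ∀ t : ℕ, g ((φ ^ t) a) = g a := by
        intro t
        induction t with
        | zero => rfl
        | succ t iht =>
          have h : (φ ^ (t + 1)) a = φ ((φ ^ t) a) := by rw [pow_succ']; rfl
          rw [h, hg, iht]
      have hsumO : ∑ i ∈ O, g i = p • g a := by
        rw [hO, Finset.sum_image hinj]
        simp only [hgpow]
        simp
      have hsplit : ∑ i ∈ s, g i = ∑ i ∈ s', g i + ∑ i ∈ O, g i := by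
        rw [hs']; exact (Finset.sum_sdiff hOsub).symm
      rw [hsplit, hsumO, hr' g hg, Finset.sum_insert har', smul_add]
      abel

namespace FusionData

set_option maxHeartbeats 1000000 in
lemma d_rational {n p : ℕ} (hp : p.Prime) (F : FusionData n)
    (φ : Equiv.Perm (Fin n)) (hA : F.IsAut φ) (hord : orderOf φ = p)
    (hfpf : F.Fpf φ) (d : Fin n → ℝ) (hd : F.IsFPdim d) (i₀ : Fin n) :
    ∃ m : ℤ, d i₀ = (m : ℝ) := by
  classical
  have hphi : ∀ i, d (φ i) = d i := F.fpdim_phi hA hd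
  have hint : ∀ i, IsIntegral ℤ (d i) := F.d_integral hd
  set y : Fin n → ℂ := fun i => ((d i : ℝ) : ℂ) with hy
  have hyint : ∀ i, IsIntegral ℤ (y i) :=
    fun i => (hint i).map (Complex.ofRealHom.toIntAlgHom)
  have hyQ : ∀ i, IsIntegral ℚ (y i) := fun i => (hyint i).tower_top
  have hyone : y F.one = 1 := by
    rw [hy]; simp [F.d_one hd]
  have hyphi : ∀ i, y (φ i) = y i := by
    intro i; rw [hy]; simp [hphi i]
  have hymul : ∀ i j, y i * y j = ∑ k, (F.c i j k : ℂ) * y k := by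
    intro i j
    have h := hd.2 i j
    calc y i * y j = ((d i * d j : ℝ) : ℂ) := by rw [hy]; push_cast; ring
      _ = ((∑ k, (F.c i j k : ℝ) * d k : ℝ) : ℂ) := by rw [h]
      _ = ∑ k, (F.c i j k : ℂ) * y k := by rw [hy]; push_cast; rfl
  set P : Polynomial ℚ := ∏ i, minpoly ℚ (y i) with hP
  have hPsplits : (P.map (algebraMap ℚ ℂ)).Splits := IsAlgClosed.splits _
  set K : IntermediateField ℚ ℂ := IntermediateField.adjoin ℚ (P.rootSet ℂ) with hK
  haveI hsp : P.IsSplittingField ℚ K := IntermediateField.adjoin_rootSet_isSplittingField hPsplits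
  haveI : FiniteDimensional ℚ K := Polynomial.IsSplittingField.finiteDimensional K P
  haveI : Normal ℚ K := Normal.of_isSplittingField (p := P)
  haveI : IsGalois ℚ K := { }
  have hfix : IntermediateField.fixedField (⊤ : Subgroup (K ≃ₐ[ℚ] K)) = ⊥ :=
    OrderIso.map_bot (IsGalois.intermediateFieldEquivSubgroup (F := ℚ) (E := K)).symm
  have hPne : P ≠ 0 := by
    rw [hP]
    exact Finset.prod_ne_zero_iff.mpr (fun i _ => minpoly.ne_zero (hyQ i))
  have hmem : ∀ i, y i ∈ K := by
    intro i
    apply IntermediateField.subset_adjoin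
    rw [Polynomial.mem_rootSet]
    refine ⟨hPne, ?_⟩
    rw [hP, map_prod]
    exact Finset.prod_eq_zero (Finset.mem_univ i) (minpoly.aeval ℚ (y i))
  set x : Fin n → K := fun i => ⟨y i, hmem i⟩ with hx
  have hKinj : Function.Injective (K.val) := Subtype.val_injective
  have hxval : ∀ i, (K.val) (x i) = y i := fun i => rfl
  have hxmul : ∀ i j, x i * x j = ∑ k, (F.c i j k : K) * x k := by
    intro i j
    apply hKinj
    rw [map_mul, map_sum, hxval, hxval, hymul i j]
    refine Finset.sum_congr rfl (fun k _ => ?_)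
    rw [map_mul, map_natCast, hxval]
  have hxone : x F.one = 1 := by
    apply hKinj
    rw [hxval, map_one, hyone]
  have hxphi : ∀ i, x (φ i) = x i := by
    intro i
    apply hKinj
    rw [hxval, hxval, hyphi]
  have hxint : ∀ i, IsIntegral ℤ (x i) := by
    intro i
    refine (isIntegral_algHom_iff (K.val.restrictScalars ℤ) hKinj).mp ?_
    exact hyint i
  have main : ∀ σ : K ≃ₐ[ℚ] K, ∀ i, σ (x i) = x i := by
    intro σ
    set χ : Fin n → ℂ := fun i => (K.val) (σ (x i)) with hχ
    have hχmul : ∀ i j, χ i * χ j = ∑ k, (F.c i j k : ℂ) * χ k := by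
      intro i j
      calc χ i * χ j = (K.val) (σ (x i * x j)) := by rw [hχ]; rw [map_mul, map_mul]
        _ = (K.val) (σ (∑ k, (F.c i j k : K) * x k)) := by rw [hxmul]
        _ = ∑ k, (F.c i j k : ℂ) * χ k := by
            rw [map_sum, map_sum]
            refine Finset.sum_congr rfl (fun k _ => ?_)
            rw [map_mul, map_mul, map_natCast, map_natCast]
    have hχone : χ F.one = 1 := by
      rw [hχ]
      show (K.val) (σ (x F.one)) = 1
      rw [hxone, map_one, map_one]
    have hχphi : ∀ i, χ (φ i) = χ i := by
      intro i
      show (K.val) (σ (x (φ i))) = (K.val) (σ (x i))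
      rw [hxphi]
    have hχint : ∀ i, IsIntegral ℤ (χ i) := by
      intro i
      have h1 : IsIntegral ℤ (σ (x i)) := (hxint i).map (σ.toAlgHom.restrictScalars ℤ)
      exact h1.map (K.val.restrictScalars ℤ)
    by_contra hnall
    push_neg at hnall
    obtain ⟨a, ha⟩ := hnall
    have hya : y a ≠ χ a := by
      intro hc
      exact ha (hKinj (by rw [hxval, hc]))
    have hkey := F.key y χ hymul hχmul a
    set T : ℂ := ∑ i, y i * χ (F.dual i) with hT
    have hT0 : T = 0 := by
      by_contra hT0
      exact hya (mul_right_cancel₀ hT0 hkey)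
    set s : Finset (Fin n) := Finset.univ.erase F.one with hs
    have hcl : ∀ i ∈ s, φ i ∈ s := by
      intro i hi
      have hne' := (Finset.mem_erase.mp hi).1
      refine Finset.mem_erase.mpr ⟨?_, Finset.mem_univ _⟩
      intro hc
      exact hne' (φ.injective (by rw [hc, hA.1]))
    have hnf : ∀ i ∈ s, φ i ≠ i := fun i hi hc => (Finset.mem_erase.mp hi).1 (hfpf i hc)
    obtain ⟨r, hrsub, hr⟩ := exists_reps hp hord s hcl hnf
    set g : Fin n → ℂ := fun i => y i * χ (F.dual i) with hg
    have hginv : ∀ i, g (φ i) = g i := by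
      intro i
      show y (φ i) * χ (F.dual (φ i)) = y i * χ (F.dual i)
      rw [hyphi, ← F.phi_dual hA i, hχphi]
    have hsum : ∑ i ∈ s, g i = p • ∑ i ∈ r, g i := hr g hginv
    have hTsplit : T = g F.one + ∑ i ∈ s, g i := by
      rw [hT, hs, Finset.add_sum_erase _ g (Finset.mem_univ F.one)]
    have hgone : g F.one = 1 := by
      show y F.one * χ (F.dual F.one) = 1
      rw [F.dual_one, hyone, hχone, one_mul]
    set β : ℂ := ∑ i ∈ r, g i with hβ
    have hβint : IsIntegral ℤ β := by
      refine IsIntegral.sum _ (fun i _ => ?_)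
      exact (hyint i).mul (hχint _)
    have heq : (p : ℂ) * β = -1 := by
      have h0 : (0 : ℂ) = 1 + p • β := by rw [← hT0, hTsplit, hgone, hsum]
      rw [nsmul_eq_mul] at h0
      linear_combination -h0
    have hpne : (p : ℂ) ≠ 0 := Nat.cast_ne_zero.mpr hp.ne_zero
    have hβval : β = (((-1 : ℚ) / p : ℚ) : ℂ) := by
      push_cast
      field_simp
      linear_combination heq
    have hβQ : IsIntegral ℤ ((-1 : ℚ) / p) := by
      rw [hβval] at hβint
      exact (isIntegral_algHom_iff ((algebraMap ℚ ℂ).toIntAlgHom)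
        (algebraMap ℚ ℂ).injective).mp hβint
    obtain ⟨m, hm⟩ := IsIntegrallyClosed.isIntegral_iff.mp hβQ
    have hpq : ((p : ℚ)) ≠ 0 := Nat.cast_ne_zero.mpr hp.ne_zero
    have hmq : (m : ℚ) * p = -1 := by
      have h' : (m : ℚ) = -1 / p := hm
      rw [h']
      field_simp
    have hmz : m * (p : ℤ) = -1 := by exact_mod_cast hmq
    have hdvd : (p : ℤ) ∣ 1 := ⟨-m, by linear_combination hmz⟩
    have hle : (p : ℤ) ≤ 1 := Int.le_of_dvd one_pos hdvd
    have h2 : (2 : ℤ) ≤ (p : ℤ) := by exact_mod_cast hp.two_le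
    omega
  have hbot : x i₀ ∈ (⊥ : IntermediateField ℚ K) := by
    rw [← hfix]
    intro g
    exact main g i₀
  rw [IntermediateField.mem_bot] at hbot
  obtain ⟨q, hq⟩ := hbot
  have hyq : y i₀ = ((q : ℝ) : ℂ) := by
    have h1 : (K.val) (algebraMap ℚ K q) = algebraMap ℚ ℂ q := K.val.commutes q
    rw [hq, hxval] at h1
    rw [h1]
    push_cast
    rfl
  have hdq : d i₀ = (q : ℝ) := by
    have h' : ((d i₀ : ℝ) : ℂ) = ((q : ℝ) : ℂ) := hyq
    exact_mod_cast h' 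
  have hqint : IsIntegral ℤ q := by
    refine (isIntegral_algHom_iff ((algebraMap ℚ ℝ).toIntAlgHom)
      (algebraMap ℚ ℝ).injective).mp ?_
    show IsIntegral ℤ ((q : ℝ))
    rw [← hdq]
    exact hint i₀
  obtain ⟨m, hm⟩ := IsIntegrallyClosed.isIntegral_iff.mp hqint
  exact ⟨m, by rw [hdq, ← hm]; rfl⟩

end FusionData

theorem stmt1 {n p : ℕ} (hp : p.Prime) (F : FusionData n)
    (φ : Equiv.Perm (Fin n)) (hA : F.IsAut φ) (hord : orderOf φ = p)
    (hfpf : F.Fpf φ) (d : Fin n → ℝ) (hd : F.IsFPdim d) :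
    (∀ i, ∃ m : ℤ, d i = (m : ℝ)) ∧
      ∃ N : ℤ, (∑ i, d i ^ 2) = (N : ℝ) ∧ N % (p : ℤ) = 1 := by
  classical
  have hrat : ∀ i, ∃ m : ℤ, d i = (m : ℝ) :=
    FusionData.d_rational hp F φ hA hord hfpf d hd
  choose m hm using hrat
  refine ⟨fun i => ⟨m i, hm i⟩, ?_⟩
  have hphi : ∀ i, d (φ i) = d i := F.fpdim_phi hA hd
  have hmphi : ∀ i, m (φ i) = m i := by
    intro i
    have h : ((m (φ i) : ℤ) : ℝ) = ((m i : ℤ) : ℝ) := by rw [← hm, ← hm, hphi]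
    exact_mod_cast h
  have hmone : m F.one = 1 := by
    have h : ((m F.one : ℤ) : ℝ) = 1 := by rw [← hm]; exact F.d_one hd
    exact_mod_cast h
  set s : Finset (Fin n) := Finset.univ.erase F.one with hs
  have hcl : ∀ i ∈ s, φ i ∈ s := by
    intro i hi
    have hne' := (Finset.mem_erase.mp hi).1
    refine Finset.mem_erase.mpr ⟨?_, Finset.mem_univ _⟩
    intro hc
    exact hne' (φ.injective (by rw [hc, hA.1]))
  have hnf : ∀ i ∈ s, φ i ≠ i := fun i hi hc => (Finset.mem_erase.mp hi).1 (hfpf i hc)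
  obtain ⟨r, hrsub, hr⟩ := exists_reps hp hord s hcl hnf
  have hsum := hr (M := ℤ) (fun i => m i ^ 2) (fun i => by beta_reduce; rw [hmphi])
  refine ⟨∑ i, m i ^ 2, ?_, ?_⟩
  · have hc : (((∑ i, m i ^ 2 : ℤ)) : ℝ) = ∑ i, ((m i : ℝ)) ^ 2 := by push_cast; rfl
    rw [hc]
    exact Finset.sum_congr rfl (fun i _ => by rw [hm i])
  · have hsplit : (∑ i, m i ^ 2) = m F.one ^ 2 + ∑ i ∈ s, m i ^ 2 := by
      rw [hs, Finset.add_sum_erase _ (fun i => m i ^ 2) (Finset.mem_univ F.one)]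
    rw [hsplit, hmone, one_pow, hsum, nsmul_eq_mul, Int.add_mul_emod_self_left]
    exact Int.emod_eq_of_lt (by norm_num) (by exact_mod_cast hp.one_lt)
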